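/- Let P be a d-dimensional lattice polytope decomposed as a union P = ⋃_{ε} P_ε over 2^d pieces, each lattice-equivalent to a fixed polytope Q, such that intersections of pieces are lower-dimensional slices indexed by induced sub-decompositions. Concretely (as in the paper): if L_{B_G}(n) denotes the Ehrhart polynomial of B_G for a graph G on [d], and L_{P_H̃}(n) the Ehrhart polynomial of the orthant piece for each induced subgraph H of G, then L_{B_G}(n) = ∑_{j=0}^{d} 2^j (-1)^{d-j} ∑_{H ∈ S_j(G)} L_{P_H̃}(n), where S_j(G) is the set of induced subgraphs of G on j vertices. -/

import Mathlib

open Finset Pointwise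

/-- The `i`-th standard unit vector in `ℝ^d`. -/
noncomputable def stdVec (d : ℕ) (i : Fin d) : Fin d → ℝ := Pi.single i 1

/-- The point configuration `B(G) = {0, ±e₁, …, ±e_d} ∪ {±e_i ± e_j : {i,j} ∈ E(G)}`. -/
def BSet {d : ℕ} (G : SimpleGraph (Fin d)) : Set (Fin d → ℝ) :=
  {0} ∪ {x | ∃ i, x = stdVec d i ∨ x = -stdVec d i} ∪
    {x | ∃ i j, G.Adj i j ∧
      (x = stdVec d i + stdVec d j ∨ x = stdVec d i - stdVec d j ∨
       x = -stdVec d i + stdVec d j ∨ x = -stdVec d i - stdVec d j)}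

/-- The generating points of the nonnegative-orthant piece of `B_H` for the induced
subgraph `H` of `G` on the vertex set `S` (a copy of the edge polytope of `H̃`). -/
def QSet {d : ℕ} (G : SimpleGraph (Fin d)) (S : Finset (Fin d)) : Set (Fin d → ℝ) :=
  {0} ∪ {x | ∃ i ∈ S, x = stdVec d i} ∪
    {x | ∃ i ∈ S, ∃ j ∈ S, G.Adj i j ∧ x = stdVec d i + stdVec d j}

namespace Aux16

variable {d : ℕ} {G : SimpleGraph (Fin d)} {S : Finset (Fin d)}

lemma stdVec_apply (i k : Fin d) : stdVec d i k = if k = i then 1 else 0 := by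
  simp [stdVec, Pi.single_apply]

lemma zero_mem_Q : (0 : Fin d → ℝ) ∈ QSet G S := Or.inl (Or.inl rfl)

lemma single_mem_Q {i : Fin d} (hi : i ∈ S) : stdVec d i ∈ QSet G S :=
  Or.inl (Or.inr ⟨i, hi, rfl⟩)

lemma pair_mem_Q {i j : Fin d} (hi : i ∈ S) (hj : j ∈ S) (h : G.Adj i j) :
    stdVec d i + stdVec d j ∈ QSet G S :=
  Or.inr ⟨i, hi, j, hj, h, rfl⟩

lemma QSet_subset_BSet : QSet G S ⊆ BSet G := by
  rintro x ((rfl | ⟨i, hi, rfl⟩) | ⟨i, hi, j, hj, hij, rfl⟩)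
  · exact Or.inl (Or.inl rfl)
  · exact Or.inl (Or.inr ⟨i, Or.inl rfl⟩)
  · exact Or.inr ⟨i, j, hij, Or.inl rfl⟩

lemma QSet_mono {S' : Finset (Fin d)} (h : S ⊆ S') : QSet G S ⊆ QSet G S' := by
  rintro x ((rfl | ⟨i, hi, rfl⟩) | ⟨i, hi, j, hj, hij, rfl⟩)
  · exact zero_mem_Q
  · exact single_mem_Q (h hi)
  · exact pair_mem_Q (h hi) (h hj) hij

/-- every point of `conv Q_S` is nonnegative and supported on `S`. -/
lemma convQ_nonneg_supp {x : Fin d → ℝ} (hx : x ∈ convexHull ℝ (QSet G S)) :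
    (∀ i, 0 ≤ x i) ∧ (∀ i ∉ S, x i = 0) := by
  have hC : Convex ℝ {y : Fin d → ℝ | (∀ i, 0 ≤ y i) ∧ (∀ i ∉ S, y i = 0)} := by
    intro a ha b hb t s ht hs hts
    constructor
    · intro i
      have := ha.1 i; have := hb.1 i
      have : 0 ≤ t * a i + s * b i := by positivity
      simpa using this
    · intro i hi
      simp [Pi.add_apply, ha.2 i hi, hb.2 i hi]
  have hsub : QSet G S ⊆ {y : Fin d → ℝ | (∀ i, 0 ≤ y i) ∧ (∀ i ∉ S, y i = 0)} := by
    rintro y ((rfl | ⟨i, hi, rfl⟩) | ⟨i, hi, j, hj, hij, rfl⟩)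
    · exact ⟨fun _ => le_rfl, fun _ _ => rfl⟩
    · constructor
      · intro k; rw [stdVec_apply]; split <;> norm_num
      · intro k hk; rw [stdVec_apply]; simp only [ite_eq_right_iff]
        rintro rfl; exact absurd hi hk
    · constructor
      · intro k; simp only [Pi.add_apply, stdVec_apply]; split <;> split <;> norm_num
      · intro k hk; simp only [Pi.add_apply, stdVec_apply]
        rw [if_neg (by rintro rfl; exact hk hi), if_neg (by rintro rfl; exact hk hj)]
        norm_num
  exact convexHull_min hsub hC hx

/-- every point of `conv B` has coordinates of absolute value at most 1. -/
lemma convB_bound {x : Fin d → ℝ} (hx : x ∈ convexHull ℝ (BSet G)) :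
    ∀ i, |x i| ≤ 1 := by
  have hC : Convex ℝ {y : Fin d → ℝ | ∀ i, |y i| ≤ 1} := by
    intro a ha b hb t s ht hs hts
    intro i
    calc |(t • a + s • b) i| ≤ t * |a i| + s * |b i| := by
          simp only [Pi.add_apply, Pi.smul_apply, smul_eq_mul]
          refine (abs_add_le _ _).trans ?_
          rw [abs_mul, abs_mul, abs_of_nonneg ht, abs_of_nonneg hs]
      _ ≤ t * 1 + s * 1 := by
          gcongr; exacts [ha i, hb i]
      _ = 1 := by linarith
  have hsub : BSet G ⊆ {y : Fin d → ℝ | ∀ i, |y i| ≤ 1} := by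
    have h1 : ∀ (i k : Fin d), |stdVec d i k| ≤ 1 := by
      intro i k; rw [stdVec_apply]; split <;> norm_num
    rintro y ((rfl | ⟨i, (rfl | rfl)⟩) | ⟨i, j, hij, (rfl | rfl | rfl | rfl)⟩) k
    · norm_num
    · exact h1 i k
    · simpa using h1 i k
    all_goals {
      have hne : i ≠ j := hij.ne
      simp only [Pi.add_apply, Pi.sub_apply, Pi.neg_apply, stdVec_apply]
      rcases eq_or_ne k i with rfl | hki <;> rcases eq_or_ne k j with rfl | hkj <;>
        simp_all <;> norm_num }
  exact fun i => convexHull_min hsub hC hx i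


variable {d : ℕ} {G : SimpleGraph (Fin d)} {S : Finset (Fin d)}




section combos

/-- `a • e_i ∈ conv Q_S` for `i ∈ S`, `0 ≤ a ≤ 1`. -/
lemma singleQ {i : Fin d} (hi : i ∈ S) {a : ℝ} (ha : 0 ≤ a) (ha1 : a ≤ 1) :
    a • stdVec d i ∈ convexHull ℝ (QSet G S) := by
  have h := (convex_convexHull ℝ (QSet G S))
    (subset_convexHull ℝ _ (single_mem_Q hi)) (subset_convexHull ℝ _ (zero_mem_Q (G := G)))
    ha (by linarith : (0:ℝ) ≤ 1 - a) (by ring)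
  simpa using h

lemma comboQ {i j : Fin d} (hi : i ∈ S) (hj : j ∈ S) (hij : G.Adj i j) {a b : ℝ}
    (ha : 0 ≤ a) (hb : 0 ≤ b) (ha1 : a ≤ 1) (hb1 : b ≤ 1) :
    a • stdVec d i + b • stdVec d j ∈ convexHull ℝ (QSet G S) := by
  rcases le_total a b with h | h
  · have := (convex_convexHull ℝ (QSet G S)).sum_mem (t := (univ : Finset (Fin 3)))
      (w := ![a, b - a, 1 - b]) (z := ![stdVec d i + stdVec d j, stdVec d j, 0])
      (by intro k _; fin_cases k <;> simp <;> linarith)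
      (by simp [Fin.sum_univ_three]; try ring)
      (by intro k _; fin_cases k <;> simp
          · exact subset_convexHull ℝ _ (pair_mem_Q hi hj hij)
          · exact subset_convexHull ℝ _ (single_mem_Q hj)
          · exact subset_convexHull ℝ _ (zero_mem_Q (G := G)))
    rw [Fin.sum_univ_three] at this
    simp only [Matrix.cons_val_zero, Matrix.cons_val_one, Matrix.head_cons, Matrix.cons_val_two, Matrix.tail_cons, smul_zero, add_zero] at this
    convert this using 1
    module
  · have := (convex_convexHull ℝ (QSet G S)).sum_mem (t := (univ : Finset (Fin 3)))
      (w := ![b, a - b, 1 - a]) (z := ![stdVec d i + stdVec d j, stdVec d i, 0])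
      (by intro k _; fin_cases k <;> simp <;> linarith)
      (by simp [Fin.sum_univ_three]; try ring)
      (by intro k _; fin_cases k <;> simp
          · exact subset_convexHull ℝ _ (pair_mem_Q hi hj hij)
          · exact subset_convexHull ℝ _ (single_mem_Q hi)
          · exact subset_convexHull ℝ _ (zero_mem_Q (G := G)))
    rw [Fin.sum_univ_three] at this
    simp only [Matrix.cons_val_zero, Matrix.cons_val_one, Matrix.head_cons, Matrix.cons_val_two, Matrix.tail_cons, smul_zero, add_zero] at this
    convert this using 1
    module

lemma singleB {i : Fin d} {a : ℝ} (ha : |a| ≤ 1) :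
    a • stdVec d i ∈ convexHull ℝ (BSet G) := by
  rw [abs_le] at ha
  have h := (convex_convexHull ℝ (BSet G))
    (subset_convexHull ℝ _ (show stdVec d i ∈ BSet G from Or.inl (Or.inr ⟨i, Or.inl rfl⟩)))
    (subset_convexHull ℝ _ (show -stdVec d i ∈ BSet G from Or.inl (Or.inr ⟨i, Or.inr rfl⟩)))
    (by linarith : (0:ℝ) ≤ (1 + a) / 2) (by linarith : (0:ℝ) ≤ (1 - a) / 2) (by ring)
  convert h using 1
  module

lemma comboB {i j : Fin d} (hij : G.Adj i j) {a b : ℝ} (ha : |a| ≤ 1) (hb : |b| ≤ 1) :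
    a • stdVec d i + b • stdVec d j ∈ convexHull ℝ (BSet G) := by
  rw [abs_le] at ha hb
  have := (convex_convexHull ℝ (BSet G)).sum_mem (t := (univ : Finset (Fin 4)))
    (w := ![(1+a)*(1+b)/4, (1+a)*(1-b)/4, (1-a)*(1+b)/4, (1-a)*(1-b)/4])
    (z := ![stdVec d i + stdVec d j, stdVec d i - stdVec d j,
            -stdVec d i + stdVec d j, -stdVec d i - stdVec d j])
    (by intro k _; fin_cases k <;> simp <;> nlinarith)
    (by simp [Fin.sum_univ_four]; try ring)
    (by intro k _; fin_cases k <;> simp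
        · exact subset_convexHull ℝ _ (Or.inr ⟨i, j, hij, Or.inl rfl⟩)
        · exact subset_convexHull ℝ _ (Or.inr ⟨i, j, hij, Or.inr (Or.inl rfl)⟩)
        · exact subset_convexHull ℝ _ (Or.inr ⟨i, j, hij, Or.inr (Or.inr (Or.inl rfl))⟩)
        · exact subset_convexHull ℝ _ (Or.inr ⟨i, j, hij, Or.inr (Or.inr (Or.inr rfl))⟩))
  rw [Fin.sum_univ_four] at this
  simp only [Matrix.cons_val_zero, Matrix.cons_val_one, Matrix.head_cons,
    Matrix.cons_val_two, Matrix.cons_val_three, Matrix.tail_cons] at this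
  convert this using 1
  module

end combos

variable {d : ℕ} {G : SimpleGraph (Fin d)} {S : Finset (Fin d)}

/-- coordinatewise multiplication as a linear map -/
noncomputable def mulMap (d : ℕ) (c : Fin d → ℝ) : (Fin d → ℝ) →ₗ[ℝ] (Fin d → ℝ) :=
  LinearMap.pi (fun i => c i • LinearMap.proj i)

lemma mulMap_apply (c y : Fin d → ℝ) : mulMap d c y = fun i => c i * y i := rfl

lemma mulMap_single (c : Fin d → ℝ) (i : Fin d) :
    mulMap d c (stdVec d i) = c i • stdVec d i := by
  funext k
  simp only [mulMap_apply, Pi.smul_apply, smul_eq_mul, stdVec_apply]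
  rcases eq_or_ne k i with rfl | h
  · simp
  · simp [h]

lemma mulMap_pair (c : Fin d → ℝ) (i j : Fin d) (σ τ : ℝ) :
    mulMap d c (σ • stdVec d i + τ • stdVec d j) =
      (σ * c i) • stdVec d i + (τ * c j) • stdVec d j := by
  rw [map_add, map_smul, map_smul, mulMap_single, mulMap_single, smul_smul, smul_smul]

lemma scaleB {c : Fin d → ℝ} (hc : ∀ i, |c i| ≤ 1) {y : Fin d → ℝ}
    (hy : y ∈ convexHull ℝ (BSet G)) :
    (fun i => c i * y i) ∈ convexHull ℝ (BSet G) := by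
  have key : convexHull ℝ (BSet G) ⊆ (mulMap d c) ⁻¹' (convexHull ℝ (BSet G)) := by
    apply convexHull_min ?_ ((convex_convexHull ℝ (BSet G)).linear_preimage (mulMap d c))
    rintro v ((rfl | ⟨i, (rfl | rfl)⟩) | ⟨i, j, hij, (rfl | rfl | rfl | rfl)⟩) <;>
      simp only [Set.mem_preimage, map_zero, map_neg]
    · exact subset_convexHull ℝ _ (Or.inl (Or.inl rfl))
    · rw [mulMap_single]; exact singleB (hc i)
    · rw [mulMap_single]
      rw [← neg_smul]
      exact singleB (by simpa using hc i)
    · have h : stdVec d i + stdVec d j = (1:ℝ) • stdVec d i + (1:ℝ) • stdVec d j := by module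
      rw [h, mulMap_pair]
      exact comboB hij (by simpa using hc i) (by simpa using hc j)
    · have h : stdVec d i - stdVec d j = (1:ℝ) • stdVec d i + (-1:ℝ) • stdVec d j := by module
      rw [h, mulMap_pair]
      exact comboB hij (by simpa using hc i) (by simpa using hc j)
    · have h : -stdVec d i + stdVec d j = (-1:ℝ) • stdVec d i + (1:ℝ) • stdVec d j := by module
      rw [h, mulMap_pair]
      exact comboB hij (by simpa using hc i) (by simpa using hc j)
    · have h : -stdVec d i - stdVec d j = (-1:ℝ) • stdVec d i + (-1:ℝ) • stdVec d j := by
        module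
      rw [h, mulMap_pair]
      exact comboB hij (by simpa using hc i) (by simpa using hc j)
  exact key hy

lemma scaleQ {c : Fin d → ℝ} (hc0 : ∀ i, 0 ≤ c i) (hc1 : ∀ i, c i ≤ 1)
    (hcS : ∀ i ∉ S, c i = 0) {y : Fin d → ℝ}
    (hy : y ∈ convexHull ℝ (QSet G Finset.univ)) :
    (fun i => c i * y i) ∈ convexHull ℝ (QSet G S) := by
  have key : convexHull ℝ (QSet G Finset.univ) ⊆ (mulMap d c) ⁻¹' (convexHull ℝ (QSet G S)) := by
    apply convexHull_min ?_ ((convex_convexHull ℝ (QSet G S)).linear_preimage (mulMap d c))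
    rintro v ((rfl | ⟨i, -, rfl⟩) | ⟨i, -, j, -, hij, rfl⟩) <;>
      simp only [Set.mem_preimage, map_zero]
    · exact subset_convexHull ℝ _ zero_mem_Q
    · rw [mulMap_single]
      by_cases hi : i ∈ S
      · exact singleQ hi (hc0 i) (hc1 i)
      · rw [hcS i hi, zero_smul]
        exact subset_convexHull ℝ _ zero_mem_Q
    · have h : stdVec d i + stdVec d j = (1:ℝ) • stdVec d i + (1:ℝ) • stdVec d j := by module
      rw [h, mulMap_pair, one_mul, one_mul]
      by_cases hi : i ∈ S <;> by_cases hj : j ∈ S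
      · exact comboQ hi hj hij (hc0 i) (hc0 j) (hc1 i) (hc1 j)
      · rw [hcS j hj, zero_smul, add_zero]
        exact singleQ hi (hc0 i) (hc1 i)
      · rw [hcS i hi, zero_smul, zero_add]
        exact singleQ hj (hc0 j) (hc1 j)
      · rw [hcS i hi, hcS j hj, zero_smul, zero_smul, add_zero]
        exact subset_convexHull ℝ _ zero_mem_Q
  exact key hy


variable {d : ℕ} {G : SimpleGraph (Fin d)} {S : Finset (Fin d)}

lemma absB {v : Fin d → ℝ} (hv : v ∈ BSet G) :
    (fun k => |v k|) ∈ QSet G (Finset.univ : Finset (Fin d)) := by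
  rcases hv with (rfl | ⟨i, (rfl | rfl)⟩) | ⟨i, j, hij, (rfl | rfl | rfl | rfl)⟩
  · have : (fun k => |(0 : Fin d → ℝ) k|) = (0 : Fin d → ℝ) := by
      funext k; simp
    rw [this]; exact zero_mem_Q
  · have : (fun k => |stdVec d i k|) = stdVec d i := by
      funext k; rw [stdVec_apply]; split <;> norm_num
    rw [this]; exact single_mem_Q (Finset.mem_univ i)
  · have : (fun k => |(-stdVec d i) k|) = stdVec d i := by
      funext k; simp only [Pi.neg_apply, abs_neg]
      rw [stdVec_apply]; split <;> norm_num
    rw [this]; exact single_mem_Q (Finset.mem_univ i)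
  all_goals {
    have hne : i ≠ j := hij.ne
    have : (fun k => |(stdVec d i + stdVec d j) k|) = stdVec d i + stdVec d j ∧
        (fun k => |(stdVec d i - stdVec d j) k|) = stdVec d i + stdVec d j ∧
        (fun k => |(-stdVec d i + stdVec d j) k|) = stdVec d i + stdVec d j ∧
        (fun k => |(-stdVec d i - stdVec d j) k|) = stdVec d i + stdVec d j := by
      refine ⟨?_, ?_, ?_, ?_⟩ <;> funext k <;>
        simp only [Pi.add_apply, Pi.sub_apply, Pi.neg_apply, stdVec_apply] <;>
        rcases eq_or_ne k i with rfl | hki <;> rcases eq_or_ne k j with rfl | hkj <;>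
        simp_all <;> norm_num
    first
      | (rw [this.1]; exact pair_mem_Q (Finset.mem_univ i) (Finset.mem_univ j) hij)
      | (rw [this.2.1]; exact pair_mem_Q (Finset.mem_univ i) (Finset.mem_univ j) hij)
      | (rw [this.2.2.1]; exact pair_mem_Q (Finset.mem_univ i) (Finset.mem_univ j) hij)
      | (rw [this.2.2.2]; exact pair_mem_Q (Finset.mem_univ i) (Finset.mem_univ j) hij) }

lemma absFold {x : Fin d → ℝ} (hx : x ∈ convexHull ℝ (BSet G)) :
    ∃ y ∈ convexHull ℝ (QSet G (Finset.univ : Finset (Fin d))), ∀ i, |x i| ≤ y i := by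
  rw [_root_.convexHull_eq] at hx
  obtain ⟨ι, t, w, z, hw0, hw1, hz, hxc⟩ := hx
  refine ⟨∑ i ∈ t, w i • (fun k => |z i k|), ?_, ?_⟩
  · exact (convex_convexHull ℝ _).sum_mem hw0 hw1
      (fun i hi => subset_convexHull ℝ _ (absB (hz i hi)))
  · intro k
    have hxk : x k = ∑ i ∈ t, w i * z i k := by
      rw [← hxc, Finset.centerMass_eq_of_sum_1 _ _ hw1]
      simp [Finset.sum_apply]
    rw [hxk]
    have h2 : (∑ i ∈ t, w i • (fun k => |z i k|)) k = ∑ i ∈ t, w i * |z i k| := by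
      simp [Finset.sum_apply]
    rw [h2]
    refine (Finset.abs_sum_le_sum_abs _ _).trans ?_
    apply Finset.sum_le_sum
    intro i hi
    rw [abs_mul, abs_of_nonneg (hw0 i hi)]

/-- P1 -/
lemma memB_iff_abs {x : Fin d → ℝ} :
    x ∈ convexHull ℝ (BSet G) ↔
      (fun i => |x i|) ∈ convexHull ℝ (QSet G (Finset.univ : Finset (Fin d))) := by
  constructor
  · intro hx
    obtain ⟨y, hy, hle⟩ := absFold hx
    have hy0 : ∀ i, 0 ≤ y i := (convQ_nonneg_supp hy).1
    set c : Fin d → ℝ := fun i => if y i = 0 then 0 else |x i| / y i with hc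
    have key := scaleQ (S := (Finset.univ : Finset (Fin d))) (c := c)
      (fun i => by
        simp only [hc]; split
        · exact le_rfl
        · exact div_nonneg (abs_nonneg _) (hy0 i))
      (fun i => by
        simp only [hc]; split
        · norm_num
        · rename_i h
          rw [div_le_one ((hy0 i).lt_of_ne (Ne.symm h))]
          exact hle i)
      (fun i hi => absurd (Finset.mem_univ i) hi) hy
    have : (fun i => c i * y i) = fun i => |x i| := by
      funext i
      simp only [hc]
      split
      · rename_i h
        have h1 := hle i
        rw [h] at h1
        have h2 : |x i| = 0 := le_antisymm h1 (abs_nonneg _)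
        rw [h2, zero_mul]
      · rename_i h
        field_simp
    rwa [this] at key
  · intro hx
    have hx' : (fun i => |x i|) ∈ convexHull ℝ (BSet G) :=
      convexHull_mono QSet_subset_BSet hx
    have key := scaleB (c := fun i => if x i < 0 then (-1 : ℝ) else 1)
      (fun i => by split <;> norm_num) hx'
    have : (fun i => (if x i < 0 then (-1:ℝ) else 1) * |x i|) = x := by
      funext i
      split
      · rename_i h
        rw [abs_of_neg h]; ring
      · rename_i h
        rw [abs_of_nonneg (not_lt.1 h), one_mul]
    rwa [this] at key

/-- P2 -/
lemma memQ_iff {x : Fin d → ℝ} :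
    x ∈ convexHull ℝ (QSet G S) ↔
      (∀ i, 0 ≤ x i) ∧ (∀ i ∉ S, x i = 0) ∧ x ∈ convexHull ℝ (BSet G) := by
  constructor
  · intro hx
    exact ⟨(convQ_nonneg_supp hx).1, (convQ_nonneg_supp hx).2,
      convexHull_mono QSet_subset_BSet hx⟩
  · rintro ⟨h0, hS, hB⟩
    have habs : (fun i => |x i|) = x := by funext i; exact abs_of_nonneg (h0 i)
    have hx' : x ∈ convexHull ℝ (QSet G (Finset.univ : Finset (Fin d))) := by
      rw [← habs]; exact memB_iff_abs.1 hB
    have key := scaleQ (S := S) (c := fun i => if i ∈ S then (1:ℝ) else 0)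
      (fun i => by split <;> norm_num) (fun i => by split <;> norm_num)
      (fun i hi => by simp [hi]) hx'
    have : (fun i => (if i ∈ S then (1:ℝ) else 0) * x i) = x := by
      funext i
      split
      · rw [one_mul]
      · rename_i h
        rw [hS i h, mul_zero]
    rwa [this] at key


variable {d : ℕ} {G : SimpleGraph (Fin d)} {S : Finset (Fin d)}

/-- embedding of integer points -/
def emb {d : ℕ} (x : Fin d → ℤ) : Fin d → ℝ := fun i => (x i : ℝ)

variable {n : ℕ}

lemma memB_int_iff (hn : 0 < n) {x : Fin d → ℤ} :
    emb x ∈ (n : ℝ) • convexHull ℝ (BSet G) ↔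
      emb (fun i => |x i|) ∈ (n : ℝ) • convexHull ℝ (QSet G (Finset.univ : Finset (Fin d))) := by
  have hne : (n : ℝ) ≠ 0 := by positivity
  rw [Set.mem_smul_set_iff_inv_smul_mem₀ hne, Set.mem_smul_set_iff_inv_smul_mem₀ hne,
    memB_iff_abs]
  have : (fun i => |((n:ℝ)⁻¹ • emb x) i|) = (n:ℝ)⁻¹ • emb (fun i => |x i|) := by
    funext i
    simp only [Pi.smul_apply, smul_eq_mul, emb, abs_mul, Int.cast_abs]
    rw [abs_of_nonneg (by positivity : (0:ℝ) ≤ (n:ℝ)⁻¹)]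
  rw [this]

lemma memQ_int_iff (hn : 0 < n) {x : Fin d → ℤ} :
    emb x ∈ (n : ℝ) • convexHull ℝ (QSet G S) ↔
      (∀ i, 0 ≤ x i) ∧ (∀ i ∉ S, x i = 0) ∧ emb x ∈ (n : ℝ) • convexHull ℝ (BSet G) := by
  have hne : (n : ℝ) ≠ 0 := by positivity
  have hpos : (0:ℝ) < (n:ℝ)⁻¹ := by positivity
  rw [Set.mem_smul_set_iff_inv_smul_mem₀ hne, Set.mem_smul_set_iff_inv_smul_mem₀ hne,
    memQ_iff]
  constructor
  · rintro ⟨h0, hS, hB⟩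
    refine ⟨fun i => ?_, fun i hi => ?_, hB⟩
    · have := h0 i
      simp only [Pi.smul_apply, smul_eq_mul, emb] at this
      exact_mod_cast nonneg_of_mul_nonneg_right this hpos
    · have := hS i hi
      simp only [Pi.smul_apply, smul_eq_mul, emb] at this
      have h2 : (x i : ℝ) = 0 := by
        rcases mul_eq_zero.1 this with h | h
        · exact absurd h (ne_of_gt hpos)
        · exact h
      exact_mod_cast h2
  · rintro ⟨h0, hS, hB⟩
    refine ⟨fun i => ?_, fun i hi => ?_, hB⟩
    · simp only [Pi.smul_apply, smul_eq_mul, emb]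
      have : (0:ℝ) ≤ (x i : ℝ) := by exact_mod_cast h0 i
      positivity
    · simp only [Pi.smul_apply, smul_eq_mul, emb]
      rw [show ((x i : ℝ)) = 0 by exact_mod_cast hS i hi, mul_zero]

lemma memB_int_bound (hn : 0 < n) {x : Fin d → ℤ}
    (hx : emb x ∈ (n : ℝ) • convexHull ℝ (BSet G)) : ∀ i, |x i| ≤ (n : ℤ) := by
  have hne : (n : ℝ) ≠ 0 := by positivity
  rw [Set.mem_smul_set_iff_inv_smul_mem₀ hne] at hx
  intro i
  have h := convB_bound hx i
  simp only [Pi.smul_apply, smul_eq_mul, emb, abs_mul] at h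
  rw [abs_of_nonneg (by positivity : (0:ℝ) ≤ (n:ℝ)⁻¹)] at h
  have h2 : |(x i : ℝ)| ≤ (n : ℝ) := by
    rw [inv_mul_le_iff₀ (by positivity), mul_one] at h
    exact h
  exact_mod_cast h2

/-- number of supersets of cardinality `j`. -/
lemma card_supersets (T : Finset (Fin d)) {j : ℕ} (hT : T.card ≤ j) :
    ((Finset.powersetCard j (Finset.univ : Finset (Fin d))).filter
      (fun S => T ⊆ S)).card = (d - T.card).choose (j - T.card) := by
  classical
  have key : ((Finset.powersetCard j (Finset.univ : Finset (Fin d))).filter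
      (fun S => T ⊆ S)).card = (Finset.powersetCard (j - T.card) Tᶜ).card := by
    apply Finset.card_bij' (fun S _ => S \ T) (fun U _ => U ∪ T)
    · intro S hS
      simp only [Finset.mem_filter, Finset.mem_powersetCard] at hS
      obtain ⟨⟨-, hcard⟩, hTS⟩ := hS
      rw [Finset.mem_powersetCard]
      constructor
      · intro x hx
        rw [Finset.mem_compl]
        exact (Finset.mem_sdiff.1 hx).2
      · rw [Finset.card_sdiff_of_subset hTS, hcard]
    · intro U hU
      rw [Finset.mem_powersetCard] at hU
      obtain ⟨hUc, hcard⟩ := hU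
      have hdisj : Disjoint U T := by
        rw [Finset.disjoint_right]
        intro a haT haU
        exact (Finset.mem_compl.1 (hUc haU)) haT
      simp only [Finset.mem_filter, Finset.mem_powersetCard]
      refine ⟨⟨Finset.subset_univ _, ?_⟩, Finset.subset_union_right⟩
      rw [Finset.card_union_of_disjoint hdisj, hcard]
      omega
    · intro S hS
      simp only [Finset.mem_filter] at hS
      exact Finset.sdiff_union_of_subset hS.2
    · intro U hU
      rw [Finset.mem_powersetCard] at hU
      have hdisj : Disjoint U T := by
        rw [Finset.disjoint_right]
        intro a haT haU
        exact (Finset.mem_compl.1 (hU.1 haU)) haT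
      rw [Finset.union_sdiff_right, Finset.sdiff_eq_self_iff_disjoint]
      exact hdisj
  rw [key, Finset.card_powersetCard, Finset.card_compl, Fintype.card_fin]

lemma card_supersets_zero (T : Finset (Fin d)) {j : ℕ} (hT : j < T.card) :
    ((Finset.powersetCard j (Finset.univ : Finset (Fin d))).filter
      (fun S => T ⊆ S)).card = 0 := by
  classical
  rw [Finset.card_eq_zero, Finset.eq_empty_iff_forall_notMem]
  intro S hS
  simp only [Finset.mem_filter, Finset.mem_powersetCard] at hS
  have := Finset.card_le_card hS.2
  omega

/-- key binomial identity -/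
lemma sum_supersets (T : Finset (Fin d)) :
    ∑ j ∈ Finset.range (d + 1), (2:ℤ) ^ j * (-1) ^ (d - j) *
      (((Finset.powersetCard j (Finset.univ : Finset (Fin d))).filter
        (fun S => T ⊆ S)).card : ℤ) = 2 ^ T.card := by
  classical
  set t := T.card with htdef
  have ht : t ≤ d := by
    have := Finset.card_le_card (Finset.subset_univ T)
    simpa using this
  have hsplit : Finset.range (d+1) = Finset.Ico 0 t ∪ Finset.Ico t (d+1) := by
    rw [Finset.range_eq_Ico, ← Finset.Ico_union_Ico_eq_Ico (Nat.zero_le t) (by omega)]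
  rw [hsplit, Finset.sum_union (by
    rw [Finset.disjoint_left]
    intro a ha hb
    simp only [Finset.mem_Ico] at ha hb
    omega)]
  have h1 : ∑ j ∈ Finset.Ico 0 t, (2:ℤ) ^ j * (-1) ^ (d - j) *
      (((Finset.powersetCard j (Finset.univ : Finset (Fin d))).filter
        (fun S => T ⊆ S)).card : ℤ) = 0 := by
    apply Finset.sum_eq_zero
    intro j hj
    rw [Finset.mem_Ico] at hj
    rw [card_supersets_zero T (by omega)]
    ring
  rw [h1, zero_add]
  have h2 : ∀ j ∈ Finset.Ico t (d+1),
      (2:ℤ) ^ j * (-1) ^ (d - j) *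
      (((Finset.powersetCard j (Finset.univ : Finset (Fin d))).filter
        (fun S => T ⊆ S)).card : ℤ)
      = (2:ℤ) ^ j * (-1) ^ (d - j) * ((d - t).choose (j - t) : ℤ) := by
    intro j hj
    rw [Finset.mem_Ico] at hj
    rw [card_supersets T hj.1]
  rw [Finset.sum_congr rfl h2, Finset.sum_Ico_eq_sum_range]
  have hm : d + 1 - t = (d - t) + 1 := by omega
  rw [hm]
  set m := d - t with hmdef
  have h3 : ∀ k ∈ Finset.range (m+1),
      (2:ℤ) ^ (t + k) * (-1) ^ (d - (t + k)) * ((d - t).choose (t + k - t) : ℤ)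
      = 2 ^ t * (2 ^ k * (-1) ^ (m - k) * (m.choose k : ℤ)) := by
    intro k hk
    rw [Finset.mem_range] at hk
    have e1 : d - (t + k) = m - k := by omega
    have e2 : t + k - t = k := by omega
    rw [e1, e2, pow_add]
    ring
  rw [Finset.sum_congr rfl h3, ← Finset.mul_sum]
  have h4 : ∑ k ∈ Finset.range (m+1), (2:ℤ) ^ k * (-1) ^ (m - k) * (m.choose k : ℤ) = 1 := by
    have := add_pow (2:ℤ) (-1) m
    norm_num at this
    rw [← this]
  rw [h4, mul_one]


end Aux16

open Aux16 in
theorem stmt16 (d : ℕ) (G : SimpleGraph (Fin d)) (n : ℕ) (hn : 0 < n) :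
    (Set.ncard {x : Fin d → ℤ | (fun i => (x i : ℝ)) ∈
        (n : ℝ) • convexHull ℝ (BSet G)} : ℤ)
    = ∑ j ∈ Finset.range (d + 1), 2 ^ j * (-1) ^ (d - j) *
        ∑ S ∈ Finset.powersetCard j (Finset.univ : Finset (Fin d)),
          (Set.ncard {x : Fin d → ℤ | (fun i => (x i : ℝ)) ∈
            (n : ℝ) • convexHull ℝ (QSet G S)} : ℤ) := by
  classical
  set Box : Finset (Fin d → ℤ) := Finset.Icc (fun _ => -(n:ℤ)) (fun _ => (n:ℤ)) with hBox
  have hBoxmem : ∀ x : Fin d → ℤ, x ∈ Box ↔ ∀ i, |x i| ≤ (n:ℤ) := by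
    intro x
    rw [hBox, Finset.mem_Icc]
    constructor
    · rintro ⟨h1, h2⟩ i
      rw [abs_le]
      exact ⟨h1 i, h2 i⟩
    · intro h
      exact ⟨fun i => (abs_le.1 (h i)).1, fun i => (abs_le.1 (h i)).2⟩
  set P : (Fin d → ℤ) → Prop := fun x => emb x ∈ (n:ℝ) • convexHull ℝ (BSet G) with hP
  set Q' : Finset (Fin d) → (Fin d → ℤ) → Prop :=
    fun S x => emb x ∈ (n:ℝ) • convexHull ℝ (QSet G S) with hQ'
  set supp : (Fin d → ℤ) → Finset (Fin d) :=
    fun y => Finset.univ.filter (fun i => y i ≠ 0) with hsupp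
  set N : Finset (Fin d → ℤ) := Box.filter (Q' Finset.univ) with hN
  -- memQ univ characterization
  have hQu : ∀ y : Fin d → ℤ, Q' Finset.univ y ↔ (∀ i, 0 ≤ y i) ∧ P y := by
    intro y
    simp only [hQ']
    rw [memQ_int_iff hn]
    simp only [Finset.mem_univ, not_true_eq_false, false_implies, implies_true, true_and]
    exact Iff.rfl
  -- Step A
  have stepA : {x : Fin d → ℤ | (fun i => (x i : ℝ)) ∈
      (n : ℝ) • convexHull ℝ (BSet G)} = ↑(Box.filter P) := by
    ext x
    simp only [Set.mem_setOf_eq, Finset.coe_filter, Finset.mem_coe]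
    constructor
    · intro hx
      exact ⟨(hBoxmem x).2 (memB_int_bound hn hx), hx⟩
    · exact fun h => h.2
  -- Step B
  have stepB : ∀ S : Finset (Fin d),
      {x : Fin d → ℤ | (fun i => (x i : ℝ)) ∈ (n : ℝ) • convexHull ℝ (QSet G S)}
        = ↑(N.filter (fun y => supp y ⊆ S)) := by
    intro S
    ext y
    simp only [Set.mem_setOf_eq, Finset.coe_filter, Finset.mem_coe, hN, Finset.mem_filter]
    constructor
    · intro hy
      have h := (memQ_int_iff hn (S := S)).1 hy
      obtain ⟨h0, hSz, hB⟩ := h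
      refine ⟨⟨(hBoxmem y).2 (memB_int_bound hn hB), (hQu y).2 ⟨h0, hB⟩⟩, ?_⟩
      · intro i hi
        rw [hsupp] at hi
        simp only [Finset.mem_filter, Finset.mem_univ, true_and] at hi
        by_contra hiS
        exact hi (hSz i hiS)
    · rintro ⟨⟨hyBox, hyQ⟩, hyS⟩
      obtain ⟨h0, hB⟩ := (hQu y).1 hyQ
      refine (memQ_int_iff hn (S := S)).2 ⟨h0, ?_, hB⟩
      intro i hiS
      by_contra hzero
      have : i ∈ supp y := by
        rw [hsupp]
        simp only [Finset.mem_filter, Finset.mem_univ, true_and]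
        exact hzero
      exact hiS (hyS this)
  -- Step C
  have stepC : (Box.filter P).card = ∑ y ∈ N, 2 ^ ((supp y).card) := by
    have hmap : ∀ x ∈ Box.filter P, (fun i => |x i|) ∈ N := by
      intro x hx
      rw [Finset.mem_filter] at hx
      obtain ⟨hxBox, hxP⟩ := hx
      rw [hN, Finset.mem_filter]
      constructor
      · rw [hBoxmem]
        intro i
        rw [abs_abs]
        exact (hBoxmem x).1 hxBox i
      · exact (memB_int_iff hn).1 hxP
    rw [Finset.card_eq_sum_card_fiberwise hmap]
    apply Finset.sum_congr rfl
    intro y hy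
    rw [hN, Finset.mem_filter] at hy
    obtain ⟨hyBox, hyQ⟩ := hy
    have hy0 : ∀ i, 0 ≤ y i := ((hQu y).1 hyQ).1
    have hfib : ((Box.filter P).filter (fun x => (fun i => |x i|) = y))
        = Fintype.piFinset (fun i => ({y i, -y i} : Finset ℤ)) := by
      ext x
      rw [Finset.mem_filter, Finset.mem_filter, Fintype.mem_piFinset]
      have habs : (∀ i, x i ∈ ({y i, -y i} : Finset ℤ)) ↔ (fun i => |x i|) = y := by
        constructor
        · intro h
          funext i
          rcases Finset.mem_insert.1 (h i) with h' | h'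
          · rw [h', abs_of_nonneg (hy0 i)]
          · rw [Finset.mem_singleton] at h'
            rw [h', abs_neg, abs_of_nonneg (hy0 i)]
        · intro h i
          have : |x i| = y i := congrFun h i
          rcases abs_eq (hy0 i) |>.1 this with h' | h'
          · exact Finset.mem_insert.2 (Or.inl h')
          · exact Finset.mem_insert.2 (Or.inr (Finset.mem_singleton.2 h'))
      rw [habs]
      constructor
      · exact fun h => h.2
      · intro h
        refine ⟨⟨?_, ?_⟩, h⟩

        · rw [hBoxmem]
          intro i
          have h1 : |x i| = y i := congrFun h i
          have h2 := (hBoxmem y).1 hyBox i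
          rw [h1]
          rwa [abs_of_nonneg (hy0 i)] at h2
        · show emb x ∈ (n:ℝ) • convexHull ℝ (BSet G)
          rw [memB_int_iff hn]
          rw [h]
          exact hyQ
    rw [hfib, Fintype.card_piFinset]
    have hcard : ∀ i, ({y i, -y i} : Finset ℤ).card = if y i = 0 then 1 else 2 := by
      intro i
      split
      · rename_i h
        simp [h]
      · rename_i h
        exact Finset.card_pair (by omega)
    rw [Finset.prod_congr rfl (fun i _ => hcard i)]
    rw [Finset.prod_ite, Finset.prod_const_one, Finset.prod_const, one_mul]
  -- Step D : assemble
  rw [stepA, Set.ncard_coe_finset, stepC]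
  push_cast
  have hinner : ∀ j ∈ Finset.range (d + 1),
      (∑ S ∈ Finset.powersetCard j (Finset.univ : Finset (Fin d)),
        (Set.ncard {x : Fin d → ℤ | (fun i => (x i : ℝ)) ∈
          (n : ℝ) • convexHull ℝ (QSet G S)} : ℤ))
      = ∑ y ∈ N, (((Finset.powersetCard j (Finset.univ : Finset (Fin d))).filter
          (fun S => supp y ⊆ S)).card : ℤ) := by
    intro j _
    rw [Finset.sum_congr rfl (fun S _ => by rw [stepB S, Set.ncard_coe_finset])]
    rw [Finset.sum_congr rfl (fun S _ => (Finset.sum_boole _ _).symm)]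
    rw [Finset.sum_comm]
    exact Finset.sum_congr rfl (fun y _ => Finset.sum_boole _ _)
  have hD1 : ∑ j ∈ Finset.range (d + 1), (2:ℤ) ^ j * (-1) ^ (d - j) *
      ∑ S ∈ Finset.powersetCard j (Finset.univ : Finset (Fin d)),
        (Set.ncard {x : Fin d → ℤ | (fun i => (x i : ℝ)) ∈
          (n : ℝ) • convexHull ℝ (QSet G S)} : ℤ)
      = ∑ j ∈ Finset.range (d + 1), (2:ℤ) ^ j * (-1) ^ (d - j) *
        ∑ y ∈ N, (((Finset.powersetCard j (Finset.univ : Finset (Fin d))).filter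
            (fun S => supp y ⊆ S)).card : ℤ) :=
    Finset.sum_congr rfl (fun j hj => by rw [hinner j hj])
  have hD2 : ∑ j ∈ Finset.range (d + 1), (2:ℤ) ^ j * (-1) ^ (d - j) *
        ∑ y ∈ N, (((Finset.powersetCard j (Finset.univ : Finset (Fin d))).filter
            (fun S => supp y ⊆ S)).card : ℤ)
      = ∑ y ∈ N, ∑ j ∈ Finset.range (d + 1), (2:ℤ) ^ j * (-1) ^ (d - j) *
          (((Finset.powersetCard j (Finset.univ : Finset (Fin d))).filter
            (fun S => supp y ⊆ S)).card : ℤ) := by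
    rw [← Finset.sum_comm]
    exact Finset.sum_congr rfl (fun j _ => Finset.mul_sum _ _ _)
  have hD3 : ∑ y ∈ N, ∑ j ∈ Finset.range (d + 1), (2:ℤ) ^ j * (-1) ^ (d - j) *
          (((Finset.powersetCard j (Finset.univ : Finset (Fin d))).filter
            (fun S => supp y ⊆ S)).card : ℤ)
      = ∑ y ∈ N, (2:ℤ) ^ (supp y).card :=
    Finset.sum_congr rfl (fun y _ => sum_supersets (supp y))
  rw [hD1, hD2, hD3]
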